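/- Let V be a finite-dimensional real vector space and let p ≥ 0. For each permutation σ ∈ S_p, define the total contraction Φ_σ : (V*)^p × V^p → ℝ by Φ_σ(ω_1, …, ω_p, v_1, …, v_p) := ω_1(v_{σ(1)}) · ⋯ · ω_p(v_{σ(p)}). Then every map Φ : (V*)^p × V^p → ℝ that is ℝ-linear in each of its 2p arguments and GL(V)-invariant (i.e., Φ(ω_1 ∘ g⁻¹, …, ω_p ∘ g⁻¹, g v_1, …, g v_p) = Φ(ω_1, …, ω_p, v_1, …, v_p) for all g ∈ GL(V)) is a finite ℝ-linear combination of the maps Φ_σ, σ ∈ S_p. -/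

import Mathlib

open scoped BigOperators

namespace InvThy

open Finset

variable {p n : ℕ}

/-- multi-indices -/
abbrev Idx (p n : ℕ) := Fin p → Fin n

/-- mixed Kronecker product of `p` matrices -/
noncomputable def Kmul (F : Fin p → Matrix (Fin n) (Fin n) ℝ) :
    Matrix (Idx p n) (Idx p n) ℝ := fun a b => ∏ j, F j (a j) (b j)

/-- `p`-th Kronecker power -/
noncomputable def Kmat (p : ℕ) {n : ℕ} (A : Matrix (Fin n) (Fin n) ℝ) :
    Matrix (Idx p n) (Idx p n) ℝ := Kmul (fun _ => A)

/-- permutation operators on tensor space -/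
noncomputable def Pmat (p n : ℕ) (σ : Equiv.Perm (Fin p)) :
    Matrix (Idx p n) (Idx p n) ℝ := fun a b => if a = b ∘ σ then 1 else 0

theorem Pmat_mul_Pmat (σ τ : Equiv.Perm (Fin p)) :
    Pmat p n σ * Pmat p n τ = Pmat p n (τ * σ) := by
  ext a c
  simp only [Pmat, Matrix.mul_apply]
  rw [Finset.sum_eq_single (c ∘ ⇑τ)]
  · have h1 : (c ∘ ⇑τ) ∘ ⇑σ = c ∘ ⇑(τ * σ) := by
      funext x; simp [Equiv.Perm.mul_apply]
    rw [h1, if_pos rfl, mul_one]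
  · intro b _ hb
    rw [if_neg hb, mul_zero]
  · simp

theorem Pmat_one : Pmat p n 1 = 1 := by
  ext a b
  simp [Pmat, Matrix.one_apply, Function.comp_def]

theorem Pmat_mul_apply (σ : Equiv.Perm (Fin p)) (N : Matrix (Idx p n) (Idx p n) ℝ)
    (a c : Idx p n) : (Pmat p n σ * N) a c = N (a ∘ ⇑σ⁻¹) c := by
  simp only [Pmat, Matrix.mul_apply]
  rw [Finset.sum_eq_single (a ∘ ⇑σ⁻¹)]
  · have : a = (a ∘ ⇑σ⁻¹) ∘ ⇑σ := by funext x; simp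
    rw [if_pos this, one_mul]
  · intro b _ hb
    rw [if_neg, zero_mul]
    intro hab
    exact hb (by funext x; simp [hab])
  · simp

theorem mul_Pmat_apply (σ : Equiv.Perm (Fin p)) (N : Matrix (Idx p n) (Idx p n) ℝ)
    (a c : Idx p n) : (N * Pmat p n σ) a c = N a (c ∘ σ) := by
  simp only [Pmat, Matrix.mul_apply]
  rw [Finset.sum_eq_single (c ∘ ⇑σ)]
  · simp
  · intro b _ hb
    rw [if_neg hb, mul_zero]
  · simp

theorem symm_of_commute_Pmat {N : Matrix (Idx p n) (Idx p n) ℝ}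
    (h : ∀ σ, Pmat p n σ * N = N * Pmat p n σ) (σ : Equiv.Perm (Fin p)) (a b : Idx p n) :
    N (a ∘ σ) (b ∘ σ) = N a b := by
  have h2 := congrFun (congrFun (h σ) (a ∘ ⇑σ)) b
  rw [Pmat_mul_apply, mul_Pmat_apply] at h2
  have h3 : (a ∘ ⇑σ) ∘ ⇑σ⁻¹ = a := by funext x; simp
  rw [h3] at h2
  exact h2.symm


theorem neg_one_pow_sub {m t : ℕ} (h : t ≤ m) : ((-1 : ℝ)) ^ (m - t) = (-1) ^ m * (-1) ^ t := by
  have h3 : ((-1 : ℝ)) ^ t * (-1) ^ t = 1 := by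
    rw [← pow_add, ← two_mul, pow_mul]; norm_num
  have h4 : ((-1 : ℝ)) ^ m = (-1) ^ (m - t) * (-1) ^ t := by
    rw [← pow_add, Nat.sub_add_cancel h]
  rw [h4, mul_assoc, h3, mul_one]

theorem powerset_sum_real (x : Finset (Fin p)) :
    (∑ T ∈ x.powerset, ((-1 : ℝ)) ^ T.card) = if x = ∅ then 1 else 0 := by
  have h := Finset.sum_powerset_neg_one_pow_card (x := x)
  have h2 := congrArg (fun z : ℤ => (z : ℝ)) h
  push_cast at h2
  rw [h2]

theorem surjIndicator (φ : Fin p → Fin p) :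
    (∑ S : Finset (Fin p), if (∀ j, φ j ∈ S) then ((-1 : ℝ)) ^ (p - S.card) else 0)
      = if Function.Surjective φ then 1 else 0 := by
  classical
  set R : Finset (Fin p) := Finset.image φ Finset.univ with hR
  have hcond : ∀ S : Finset (Fin p), (∀ j, φ j ∈ S) ↔ R ⊆ S := by
    intro S
    constructor
    · intro h x hx
      obtain ⟨j, _, rfl⟩ := Finset.mem_image.mp hx
      exact h j
    · intro h j
      exact h (Finset.mem_image_of_mem φ (Finset.mem_univ j))
  have hsurj : Function.Surjective φ ↔ Rᶜ = ∅ := by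
    constructor
    · intro hs
      rw [Finset.compl_eq_empty_iff, Finset.eq_univ_iff_forall]
      intro x
      obtain ⟨j, rfl⟩ := hs x
      exact Finset.mem_image_of_mem φ (Finset.mem_univ j)
    · intro he x
      have : x ∈ R := by
        rw [Finset.compl_eq_empty_iff] at he
        rw [he]; exact Finset.mem_univ x
      obtain ⟨j, _, rfl⟩ := Finset.mem_image.mp this
      exact ⟨j, rfl⟩
  simp only [hcond]
  have step1 : (∑ S : Finset (Fin p), if R ⊆ S then ((-1 : ℝ)) ^ (p - S.card) else 0)
      = ∑ S ∈ Finset.univ.filter (fun S => R ⊆ S), ((-1 : ℝ)) ^ (p - S.card) := by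
    rw [Finset.sum_filter]
  have step2 : (∑ S ∈ Finset.univ.filter (fun S => R ⊆ S), ((-1 : ℝ)) ^ (p - S.card))
      = ∑ T ∈ Rᶜ.powerset, ((-1 : ℝ)) ^ (p - (R.card + T.card)) := by
    refine Finset.sum_nbij' (fun S => S \ R) (fun T => R ∪ T) ?_ ?_ ?_ ?_ ?_
    · intro S hS
      rw [Finset.mem_powerset]
      intro x hx
      rw [Finset.mem_compl]
      exact (Finset.mem_sdiff.mp hx).2
    · intro T hT
      simp only [Finset.mem_filter, Finset.mem_univ, true_and]
      exact Finset.subset_union_left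
    · intro S hS
      simp only [Finset.mem_filter, Finset.mem_univ, true_and] at hS
      exact Finset.union_sdiff_of_subset hS
    · intro T hT
      rw [Finset.mem_powerset] at hT
      refine Finset.union_sdiff_cancel_left ?_
      rw [Finset.disjoint_left]
      intro x hx hxT
      exact (Finset.mem_compl.mp (hT hxT)) hx
    · intro S hS
      simp only [Finset.mem_filter, Finset.mem_univ, true_and] at hS
      congr 2
      rw [← Finset.card_union_of_disjoint, Finset.union_sdiff_of_subset hS]
      rw [Finset.disjoint_left]
      intro x hx hxS
      exact (Finset.mem_sdiff.mp hxS).2 hx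
  have hcard : Rᶜ.card + R.card = p := by
    have := Finset.card_compl_add_card R
    simpa using this
  have step3 : (∑ T ∈ Rᶜ.powerset, ((-1 : ℝ)) ^ (p - (R.card + T.card)))
      = ((-1 : ℝ)) ^ Rᶜ.card * ∑ T ∈ Rᶜ.powerset, ((-1 : ℝ)) ^ T.card := by
    rw [Finset.mul_sum]
    refine Finset.sum_congr rfl fun T hT => ?_
    rw [Finset.mem_powerset] at hT
    have h1 : p - (R.card + T.card) = Rᶜ.card - T.card := by omega
    rw [h1, neg_one_pow_sub (Finset.card_le_card hT)]
  rw [step1, step2, step3, powerset_sum_real]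
  by_cases hc : Function.Surjective φ
  · rw [if_pos hc, if_pos (hsurj.mp hc), (hsurj.mp hc)]
    simp
  · rw [if_neg hc, if_neg (fun h => hc (hsurj.mpr h))]
    simp

theorem polar_sum_mem (F : Fin p → Matrix (Fin n) (Fin n) ℝ) :
    (∑ σ : Equiv.Perm (Fin p), Kmul (fun j => F (σ j))) ∈
      Submodule.span ℝ (Set.range (Kmat p (n := n))) := by
  classical
  have key : (∑ σ : Equiv.Perm (Fin p), Kmul (fun j => F (σ j)))
      = ∑ S : Finset (Fin p), ((-1 : ℝ)) ^ (p - S.card) • Kmat p (∑ i ∈ S, F i) := by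
    ext a b
    rw [Matrix.sum_apply, Matrix.sum_apply]
    have hK : ∀ S : Finset (Fin p), (((-1 : ℝ)) ^ (p - S.card) • Kmat p (∑ i ∈ S, F i)) a b
        = ∑ φ : Fin p → Fin p,
            (if (∀ j, φ j ∈ S) then ((-1 : ℝ)) ^ (p - S.card) else 0)
              * ∏ j, F (φ j) (a j) (b j) := by
      intro S
      rw [Matrix.smul_apply]
      have h1 : (Kmat p (∑ i ∈ S, F i)) a b
          = ∑ φ ∈ Fintype.piFinset (fun _ : Fin p => S), ∏ j, F (φ j) (a j) (b j) := by
        simp only [Kmat, Kmul, Matrix.sum_apply]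
        exact Finset.prod_univ_sum _ _
      have h2 : Fintype.piFinset (fun _ : Fin p => S)
          = Finset.univ.filter (fun φ : Fin p → Fin p => ∀ j, φ j ∈ S) := by
        ext φ
        simp [Fintype.mem_piFinset]
      rw [h1, h2, Finset.sum_filter]
      rw [smul_eq_mul, Finset.mul_sum]
      refine Finset.sum_congr rfl fun φ _ => ?_
      split
      · ring
      · ring
    calc (∑ σ : Equiv.Perm (Fin p), (Kmul (fun j => F (σ j))) a b)
        = ∑ φ ∈ Finset.univ.filter (fun φ : Fin p → Fin p => Function.Surjective φ),
            ∏ j, F (φ j) (a j) (b j) := by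
          refine Finset.sum_bij' (fun (σ : Equiv.Perm (Fin p)) _ => ⇑σ)
            (fun φ hφ => Equiv.ofBijective φ (Finite.surjective_iff_bijective.mp
              (by simpa using (Finset.mem_filter.mp hφ).2))) ?_ ?_ ?_ ?_ ?_
          · intro σ _
            simp [σ.surjective]
          · intro φ _; exact Finset.mem_univ _
          · intro σ _
            apply Equiv.ext
            intro x
            rfl
          · intro φ _
            rfl
          · intro σ _
            rfl
      _ = ∑ φ : Fin p → Fin p,
            (if Function.Surjective φ then (1 : ℝ) else 0) * ∏ j, F (φ j) (a j) (b j) := by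
          rw [Finset.sum_filter]
          refine Finset.sum_congr rfl fun φ _ => ?_
          split <;> ring
      _ = ∑ φ : Fin p → Fin p,
            (∑ S : Finset (Fin p), if (∀ j, φ j ∈ S) then ((-1 : ℝ)) ^ (p - S.card) else 0)
              * ∏ j, F (φ j) (a j) (b j) := by
          exact Finset.sum_congr rfl fun φ _ => by rw [surjIndicator φ]
      _ = ∑ S : Finset (Fin p), (((-1 : ℝ)) ^ (p - S.card) • Kmat p (∑ i ∈ S, F i)) a b := by
          simp only [Finset.sum_mul]
          rw [Finset.sum_comm]
          exact Finset.sum_congr rfl fun S _ => (hK S).symm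
  rw [key]
  exact Submodule.sum_mem _ fun S _ => Submodule.smul_mem _ _ (Submodule.subset_span ⟨_, rfl⟩)

theorem prod_ite_pair (u w x y : Idx p n) :
    (∏ j, if x j = u j ∧ y j = w j then (1 : ℝ) else 0)
      = if x = u ∧ y = w then 1 else 0 := by
  by_cases hc : x = u ∧ y = w
  · rw [if_pos hc]
    refine Finset.prod_eq_one fun j _ => ?_
    rw [if_pos ⟨congrFun hc.1 j, congrFun hc.2 j⟩]
  · rw [if_neg hc]
    have : ∃ j, ¬(x j = u j ∧ y j = w j) := by
      by_contra hall
      push_neg at hall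
      exact hc ⟨funext fun j => (hall j).1, funext fun j => (hall j).2⟩
    obtain ⟨j, hj⟩ := this
    exact Finset.prod_eq_zero (Finset.mem_univ j) (if_neg hj)

theorem symm_mem_span {N : Matrix (Idx p n) (Idx p n) ℝ}
    (h : ∀ (σ : Equiv.Perm (Fin p)) (a b : Idx p n), N (a ∘ σ) (b ∘ σ) = N a b) :
    N ∈ Submodule.span ℝ (Set.range (Kmat p (n := n))) := by
  classical
  have hcardG : (Fintype.card (Equiv.Perm (Fin p)) : ℝ) ≠ 0 := by
    simp [Fintype.card_ne_zero]
  set E : Idx p n → Idx p n → (Fin p → Matrix (Fin n) (Fin n) ℝ) :=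
    fun a b j => fun x y => if x = a j ∧ y = b j then 1 else 0 with hE
  have key : (Fintype.card (Equiv.Perm (Fin p)) : ℝ) • N
      = ∑ a : Idx p n, ∑ b : Idx p n, N a b • (∑ σ : Equiv.Perm (Fin p), Kmul (fun j => E a b (σ j))) := by
    ext x y
    simp only [Matrix.sum_apply, Matrix.smul_apply, smul_eq_mul]
    have hval : ∀ (a b : Idx p n) (σ : Equiv.Perm (Fin p)), Kmul (fun j => E a b (σ j)) x y
        = (if x = a ∘ ⇑σ then (1:ℝ) else 0) * (if y = b ∘ ⇑σ then 1 else 0) := by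
      intro a b σ
      have h1 : Kmul (fun j => E a b (σ j)) x y
          = if x = a ∘ ⇑σ ∧ y = b ∘ ⇑σ then 1 else 0 := by
        simp only [Kmul, hE]
        exact prod_ite_pair (a ∘ ⇑σ) (b ∘ ⇑σ) x y
      rw [h1]
      by_cases h2 : x = a ∘ ⇑σ <;> by_cases h3 : y = b ∘ ⇑σ <;> simp [h2, h3]
    calc (Fintype.card (Equiv.Perm (Fin p)) : ℝ) * N x y = ∑ _σ : Equiv.Perm (Fin p), N x y := by
          rw [Finset.sum_const, Finset.card_univ, nsmul_eq_mul]
      _ = ∑ σ : Equiv.Perm (Fin p), ∑ a : Idx p n, ∑ b : Idx p n, N a b * Kmul (fun j => E a b (σ j)) x y := by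
          refine Finset.sum_congr rfl fun σ _ => ?_
          have : ∀ a b : Idx p n, N a b * Kmul (fun j => E a b (σ j)) x y
              = ((if x = a ∘ ⇑σ then (1:ℝ) else 0) * N a b) * (if y = b ∘ ⇑σ then 1 else 0) := by
            intro a b; rw [hval]; ring
          simp only [this]
          symm
          rw [Finset.sum_eq_single (x ∘ ⇑σ⁻¹)]
          · have hx : x = (x ∘ ⇑σ⁻¹) ∘ ⇑σ := funext fun j => by
              simp [Function.comp_apply]
            rw [Finset.sum_eq_single (y ∘ ⇑σ⁻¹)]
            · have hy : y = (y ∘ ⇑σ⁻¹) ∘ ⇑σ := funext fun j => by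
                simp [Function.comp_apply]
              rw [if_pos hx, if_pos hy, one_mul, mul_one]
              exact h σ⁻¹ x y
            · intro b _ hb
              have hyb : ¬ (y = b ∘ ⇑σ) := by
                intro hyb
                refine hb (funext fun j => ?_)
                rw [Function.comp_apply, hyb, Function.comp_apply,
                  ← Equiv.Perm.mul_apply, mul_inv_cancel, Equiv.Perm.one_apply]
              rw [if_neg hyb, mul_zero]
            · intro hmem
              exact absurd (Finset.mem_univ _) hmem
          · intro a _ ha
            refine Finset.sum_eq_zero fun b _ => ?_
            have hxa : ¬ (x = a ∘ ⇑σ) := by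
              intro hxa
              refine ha (funext fun j => ?_)
              rw [Function.comp_apply, hxa, Function.comp_apply,
                ← Equiv.Perm.mul_apply, mul_inv_cancel, Equiv.Perm.one_apply]
            rw [if_neg hxa, zero_mul, zero_mul]
          · intro hmem
            exact absurd (Finset.mem_univ _) hmem
      _ = ∑ a : Idx p n, ∑ b : Idx p n, N a b * ∑ σ : Equiv.Perm (Fin p), Kmul (fun j => E a b (σ j)) x y := by
          rw [Finset.sum_comm]
          refine Finset.sum_congr rfl fun a _ => ?_
          rw [Finset.sum_comm]
          refine Finset.sum_congr rfl fun b _ => ?_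
          rw [Finset.mul_sum]
  have hN : N = (Fintype.card (Equiv.Perm (Fin p)) : ℝ)⁻¹ •
      ∑ a : Idx p n, ∑ b : Idx p n, N a b • (∑ σ : Equiv.Perm (Fin p), Kmul (fun j => E a b (σ j))) := by
    rw [← key, smul_smul, inv_mul_cancel₀ hcardG, one_smul]
  rw [hN]
  refine Submodule.smul_mem _ _ (Submodule.sum_mem _ fun a _ => Submodule.sum_mem _ fun b _ =>
    Submodule.smul_mem _ _ (polar_sum_mem _))

theorem commute_of_commute_Kmat {M N : Matrix (Idx p n) (Idx p n) ℝ}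
    (hM : ∀ A : Matrix (Fin n) (Fin n) ℝ, M * Kmat p A = Kmat p A * M)
    (hN : ∀ σ, Pmat p n σ * N = N * Pmat p n σ) :
    M * N = N * M := by
  have hNmem : N ∈ Submodule.span ℝ (Set.range (Kmat p (n := n))) :=
    symm_mem_span (symm_of_commute_Pmat hN)
  clear hN
  induction hNmem using Submodule.span_induction with
  | mem x hx =>
    obtain ⟨A, rfl⟩ := hx
    exact hM A
  | zero => simp
  | add x y _ _ hx hy => rw [mul_add, add_mul, hx, hy]
  | smul c x _ hx => rw [Matrix.mul_smul, Matrix.smul_mul, hx]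


noncomputable def embCol (l : Idx p n) :
    (Idx p n → ℝ) →ₗ[ℝ] Matrix (Idx p n) (Idx p n) ℝ where
  toFun u := fun r s => if s = l then u r else 0
  map_add' u v := by
    funext r s
    by_cases h : s = l <;> simp [h] <;> erw [Matrix.add_apply] <;> simp [h]
  map_smul' c u := by
    funext r s
    by_cases h : s = l <;> simp [h] <;> erw [Matrix.smul_apply] <;> simp [h]

noncomputable def projCol (k : Idx p n) :
    Matrix (Idx p n) (Idx p n) ℝ →ₗ[ℝ] (Idx p n → ℝ) where
  toFun X := fun r => X r k
  map_add' X Y := rfl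
  map_smul' c X := rfl

theorem embCol_mulVec (l : Idx p n) (A : Matrix (Idx p n) (Idx p n) ℝ) (u : Idx p n → ℝ) :
    embCol l (A.mulVec u) = A * embCol l u := by
  funext r s
  simp only [embCol, LinearMap.coe_mk, AddHom.coe_mk, Matrix.mul_apply]
  show (if s = l then A.mulVec u r else 0) = ∑ j, A r j * (if s = l then u j else 0)
  by_cases h : s = l
  · simp only [if_pos h, Matrix.mulVec, dotProduct]
  · simp only [if_neg h, mul_zero, Finset.sum_const_zero]

theorem mulVec_sum {α : Type*} (s : Finset α) (M : Matrix (Idx p n) (Idx p n) ℝ)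
    (f : α → (Idx p n → ℝ)) :
    M.mulVec (∑ l ∈ s, f l) = ∑ l ∈ s, M.mulVec (f l) := by
  simp only [← Matrix.mulVecLin_apply, map_sum]

theorem col_ext {X Y : Matrix (Idx p n) (Idx p n) ℝ}
    (h : ∀ k, projCol k X = projCol k Y) : X = Y := by
  funext r k
  exact congrFun (h k) r

theorem projCol_mulVec (k : Idx p n) (A X : Matrix (Idx p n) (Idx p n) ℝ) :
    projCol k (A * X) = A.mulVec (projCol k X) := by
  funext r
  simp only [projCol, LinearMap.coe_mk, AddHom.coe_mk, Matrix.mul_apply, Matrix.mulVec,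
    dotProduct]
  rfl

theorem decompCol (X : Matrix (Idx p n) (Idx p n) ℝ) :
    X = ∑ l : Idx p n, embCol l (projCol l X) := by
  funext r s
  rw [Matrix.sum_apply]
  simp only [embCol, projCol, LinearMap.coe_mk, AddHom.coe_mk]
  show X r s = ∑ l, (if s = l then X r l else 0)
  rw [Finset.sum_ite_eq Finset.univ s (fun l => X r l)]
  simp

theorem double_commutant {M : Matrix (Idx p n) (Idx p n) ℝ}
    (hM : ∀ A : Matrix (Fin n) (Fin n) ℝ, M * Kmat p A = Kmat p A * M) :
    M ∈ Submodule.span ℝ (Set.range (Pmat p n)) := by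
  classical
  have hcardG : (Fintype.card (Equiv.Perm (Fin p)) : ℝ) ≠ 0 := by
    simp [Fintype.card_ne_zero]
  set V₀ := Submodule.span ℝ (Set.range (Pmat p n)) with hV₀
  obtain ⟨q, hq⟩ := Submodule.exists_isCompl V₀
  set π₀ : Matrix (Idx p n) (Idx p n) ℝ →ₗ[ℝ] Matrix (Idx p n) (Idx p n) ℝ :=
    V₀.subtype ∘ₗ (V₀.linearProjOfIsCompl q hq) with hπ₀
  have hπ₀fix : ∀ x ∈ V₀, π₀ x = x := by
    intro x hx
    have h2 : (V₀.linearProjOfIsCompl q hq) x = ⟨x, hx⟩ :=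
      Submodule.linearProjOfIsCompl_apply_left hq ⟨x, hx⟩
    simp [hπ₀, h2]
  have hπ₀mem : ∀ x, π₀ x ∈ V₀ := fun x => Submodule.coe_mem _
  have hstab : ∀ (σ : Equiv.Perm (Fin p)) x, x ∈ V₀ → Pmat p n σ * x ∈ V₀ := by
    intro σ x hx
    induction hx using Submodule.span_induction with
    | mem y hy =>
      obtain ⟨τ, rfl⟩ := hy
      rw [Pmat_mul_Pmat]
      exact Submodule.subset_span ⟨_, rfl⟩
    | zero =>
      rw [mul_zero]
      exact Submodule.zero_mem _
    | add x y _ _ hx hy =>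
      rw [mul_add]
      exact Submodule.add_mem _ hx hy
    | smul c x _ hx =>
      rw [Matrix.mul_smul]
      exact Submodule.smul_mem _ _ hx
  set cG : ℝ := (Fintype.card (Equiv.Perm (Fin p)) : ℝ)⁻¹ with hcG
  set π : Matrix (Idx p n) (Idx p n) ℝ →ₗ[ℝ] Matrix (Idx p n) (Idx p n) ℝ :=
    cG • ∑ σ : Equiv.Perm (Fin p),
      (LinearMap.mulLeft ℝ (Pmat p n σ)) ∘ₗ π₀ ∘ₗ (LinearMap.mulLeft ℝ (Pmat p n σ⁻¹)) with hπ
  have happly : ∀ X, π X = cG • ∑ σ : Equiv.Perm (Fin p),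
      Pmat p n σ * π₀ (Pmat p n σ⁻¹ * X) := by
    intro X
    simp [hπ, LinearMap.sum_apply, LinearMap.mulLeft_apply]
  have hmem : ∀ X, π X ∈ V₀ := by
    intro X
    rw [happly]
    exact Submodule.smul_mem _ _
      (Submodule.sum_mem _ fun σ _ => hstab σ _ (hπ₀mem _))
  have hone : π 1 = 1 := by
    rw [happly]
    have h1 : ∀ σ : Equiv.Perm (Fin p), Pmat p n σ * π₀ (Pmat p n σ⁻¹ * 1)
        = (1 : Matrix (Idx p n) (Idx p n) ℝ) := by
      intro σ
      rw [mul_one, hπ₀fix _ (Submodule.subset_span ⟨σ⁻¹, rfl⟩), Pmat_mul_Pmat,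
        inv_mul_cancel, Pmat_one]
    simp only [h1]
    rw [Finset.sum_const, Finset.card_univ, ← Nat.cast_smul_eq_nsmul ℝ, smul_smul,
      hcG, inv_mul_cancel₀ hcardG, one_smul]
  have hequiv : ∀ (σ : Equiv.Perm (Fin p)) X, π (Pmat p n σ * X) = Pmat p n σ * π X := by
    intro σ X
    rw [happly, happly, Matrix.mul_smul]
    congr 1
    rw [Finset.mul_sum]
    refine (Fintype.sum_equiv (Equiv.mulRight σ) _ _ fun δ => ?_).symm
    simp only [Equiv.coe_mulRight]
    have e1 : Pmat p n ((δ * σ)⁻¹) * (Pmat p n σ * X) = Pmat p n δ⁻¹ * X := by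
      rw [mul_inv_rev, ← Pmat_mul_Pmat δ⁻¹ σ⁻¹, mul_assoc, ← mul_assoc (Pmat p n σ⁻¹),
        Pmat_mul_Pmat σ⁻¹ σ, mul_inv_cancel, Pmat_one, one_mul]
    rw [e1, ← Pmat_mul_Pmat σ δ, mul_assoc]
  -- key: M commutes with π
  have hkey : ∀ X, M * π X = π (M * X) := by
    intro X
    have hf : ∀ (k l : Idx p n) (u : Idx p n → ℝ),
        (projCol k) (π (embCol l (M.mulVec u))) = M.mulVec (projCol k (π (embCol l u))) := by
      intro k l u
      set f : (Idx p n → ℝ) →ₗ[ℝ] (Idx p n → ℝ) := (projCol k) ∘ₗ π ∘ₗ (embCol l) with hfdef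
      have hcomm : ∀ (σ : Equiv.Perm (Fin p)) (w : Idx p n → ℝ),
          f ((Pmat p n σ).mulVec w) = (Pmat p n σ).mulVec (f w) := by
        intro σ w
        simp only [hfdef, LinearMap.comp_apply]
        rw [embCol_mulVec, hequiv, projCol_mulVec]
      -- show matrix of f commutes with all Pmat
      have hNcomm : ∀ σ : Equiv.Perm (Fin p),
          Pmat p n σ * LinearMap.toMatrix' f = LinearMap.toMatrix' f * Pmat p n σ := by
        intro σ
        have h3 : Matrix.toLin' (Pmat p n σ) ∘ₗ f = f ∘ₗ Matrix.toLin' (Pmat p n σ) := by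
          apply LinearMap.ext
          intro w
          simp only [LinearMap.comp_apply, Matrix.toLin'_apply]
          exact (hcomm σ w).symm
        have h4 := congrArg (LinearMap.toMatrix' (R := ℝ)) h3
        rwa [LinearMap.toMatrix'_comp, LinearMap.toMatrix'_comp,
          LinearMap.toMatrix'_toLin'] at h4
      have hMN := commute_of_commute_Kmat hM hNcomm
      have h5 : f (M.mulVec u) = M.mulVec (f u) := by
        have h6 : f = Matrix.toLin' (LinearMap.toMatrix' f) := (Matrix.toLin'_toMatrix' f).symm
        rw [h6]
        simp only [Matrix.toLin'_apply]
        rw [Matrix.mulVec_mulVec, Matrix.mulVec_mulVec, hMN]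
      simpa [hfdef] using h5
    -- assemble
    apply col_ext
    intro k
    have hXd : M * X = ∑ l : Idx p n, embCol l (M.mulVec (projCol l X)) := by
      calc M * X = ∑ l : Idx p n, M * embCol l (projCol l X) := by
            rw [← Finset.mul_sum, ← decompCol]
        _ = ∑ l : Idx p n, embCol l (M.mulVec (projCol l X)) :=
            Finset.sum_congr rfl fun l _ => (embCol_mulVec l M _).symm
    calc projCol k (M * π X) = M.mulVec (projCol k (π X)) := projCol_mulVec k M _
      _ = M.mulVec (projCol k (π (∑ l : Idx p n, embCol l (projCol l X)))) := by
          rw [← decompCol]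
      _ = M.mulVec (∑ l : Idx p n, projCol k (π (embCol l (projCol l X)))) := by
          rw [map_sum, map_sum]
      _ = ∑ l : Idx p n, M.mulVec (projCol k (π (embCol l (projCol l X)))) :=
          mulVec_sum _ _ _
      _ = ∑ l : Idx p n, projCol k (π (embCol l (M.mulVec (projCol l X)))) :=
          Finset.sum_congr rfl fun l _ => (hf k l (projCol l X)).symm
      _ = projCol k (π (M * X)) := by
          rw [hXd, map_sum, map_sum]
  have hfinal : M = π M := by
    have h1 := hkey 1
    rw [hone, mul_one] at h1
    exact h1
  rw [hfinal]
  exact hmem M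


theorem density {M : Matrix (Idx p n) (Idx p n) ℝ}
    (h : ∀ A : Matrix (Fin n) (Fin n) ℝ, IsUnit A.det → M * Kmat p A = Kmat p A * M) :
    ∀ A : Matrix (Fin n) (Fin n) ℝ, M * Kmat p A = Kmat p A * M := by
  intro A
  classical
  ext a c
  set d : Polynomial ℝ := Matrix.charpoly (-A) with hd
  have hdeval : ∀ t : ℝ, d.eval t = (A + t • 1).det := by
    intro t
    have h1 := (Polynomial.evalRingHom t).map_det (Matrix.charmatrix (-A))
    have h2 : (Matrix.charmatrix (-A)).map (Polynomial.evalRingHom t) = A + t • 1 := by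
      ext x y
      by_cases hxy : x = y
      · subst hxy
        simp [Matrix.charmatrix_apply_eq, Matrix.one_apply, add_comm]
      · simp [Matrix.charmatrix_apply_ne _ _ _ hxy, Matrix.one_apply_ne hxy,
          Matrix.add_apply]
    have h3 : d = ((-A).charmatrix).det := rfl
    rw [h3, ← h2]
    exact h1
  have hdne : d ≠ 0 := (Matrix.charpoly_monic (-A)).ne_zero
  have hfin : {t : ℝ | ¬ IsUnit (A + t • (1 : Matrix (Fin n) (Fin n) ℝ)).det}.Finite := by
    refine Set.Finite.subset (Polynomial.finite_setOf_isRoot hdne) ?_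
    intro t ht
    simp only [Set.mem_setOf_eq, isUnit_iff_ne_zero, not_not] at ht
    simp only [Set.mem_setOf_eq, Polynomial.IsRoot, hdeval t, ht]
  have hinf : {t : ℝ | IsUnit (A + t • (1 : Matrix (Fin n) (Fin n) ℝ)).det}.Infinite := by
    have := hfin.infinite_compl
    simpa [Set.compl_setOf] using this
  set P : Polynomial ℝ :=
    (∑ b : Idx p n, Polynomial.C (M a b)
        * ∏ j, (Polynomial.C (A (b j) (c j)) + if b j = c j then Polynomial.X else 0))
      - (∑ b : Idx p n, (∏ i, (Polynomial.C (A (a i) (b i))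
        + if a i = b i then Polynomial.X else 0)) * Polynomial.C (M b c)) with hP
  have hent : ∀ (t : ℝ) (x y : Fin n),
      (A + t • (1 : Matrix (Fin n) (Fin n) ℝ)) x y = A x y + (if x = y then t else 0) := by
    intro t x y
    simp [Matrix.add_apply, Matrix.one_apply, mul_ite]
  have heval : ∀ t : ℝ, P.eval t
      = (M * Kmat p (A + t • (1 : Matrix (Fin n) (Fin n) ℝ))) a c
        - (Kmat p (A + t • (1 : Matrix (Fin n) (Fin n) ℝ)) * M) a c := by
    intro t
    simp only [hP, Polynomial.eval_sub, Polynomial.eval_finset_sum, Polynomial.eval_mul,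
      Polynomial.eval_C, Polynomial.eval_prod, Polynomial.eval_add,
      apply_ite (Polynomial.eval t), Polynomial.eval_X, Polynomial.eval_zero,
      Matrix.mul_apply, Kmat, Kmul, hent]
  have hP0 : P = 0 := by
    refine Polynomial.eq_zero_of_infinite_isRoot P (Set.Infinite.mono ?_ hinf)
    intro t ht
    simp only [Set.mem_setOf_eq, Polynomial.IsRoot]
    rw [heval t, h _ ht, sub_self]
  have := heval 0
  rw [hP0, Polynomial.eval_zero, zero_smul, add_zero] at this
  exact sub_eq_zero.mp this.symm

section Phi

variable {V : Type*} [AddCommGroup V] [Module ℝ V]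
variable (B : Module.Basis (Fin n) ℝ V)
variable (Φ : (Fin p → Module.Dual ℝ V) → (Fin p → V) → ℝ)

/-- matrix of the multilinear map in the basis -/
noncomputable def Tmat : Matrix (Idx p n) (Idx p n) ℝ :=
  fun a b => Φ (fun i => B.coord (a i)) (fun j => B (b j))

variable
    (hadd₁ : ∀ (ω : Fin p → Module.Dual ℝ V) (v : Fin p → V) (i : Fin p)
        (a b : Module.Dual ℝ V),
        Φ (Function.update ω i (a + b)) v
          = Φ (Function.update ω i a) v + Φ (Function.update ω i b) v)
    (hsmul₁ : ∀ (ω : Fin p → Module.Dual ℝ V) (v : Fin p → V) (i : Fin p)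
        (c : ℝ) (a : Module.Dual ℝ V),
        Φ (Function.update ω i (c • a)) v = c * Φ (Function.update ω i a) v)
    (hadd₂ : ∀ (ω : Fin p → Module.Dual ℝ V) (v : Fin p → V) (j : Fin p) (a b : V),
        Φ ω (Function.update v j (a + b))
          = Φ ω (Function.update v j a) + Φ ω (Function.update v j b))
    (hsmul₂ : ∀ (ω : Fin p → Module.Dual ℝ V) (v : Fin p → V) (j : Fin p)
        (c : ℝ) (a : V),
        Φ ω (Function.update v j (c • a)) = c * Φ ω (Function.update v j a))

/-- the second argument as a multilinear map, first fixed -/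
noncomputable def mlV (ω : Fin p → Module.Dual ℝ V) :
    MultilinearMap ℝ (fun _ : Fin p => V) ℝ where
  toFun v := Φ ω v
  map_update_add' := by
    intro inst v j a b
    have : inst = instDecidableEqFin p := Subsingleton.elim _ _
    subst this
    exact hadd₂ ω v j a b
  map_update_smul' := by
    intro inst v j c a
    have : inst = instDecidableEqFin p := Subsingleton.elim _ _
    subst this
    rw [smul_eq_mul]
    exact hsmul₂ ω v j c a

/-- the first argument as a multilinear map, second fixed -/
noncomputable def mlW (v : Fin p → V) :
    MultilinearMap ℝ (fun _ : Fin p => Module.Dual ℝ V) ℝ where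
  toFun ω := Φ ω v
  map_update_add' := by
    intro inst ω i a b
    have : inst = instDecidableEqFin p := Subsingleton.elim _ _
    subst this
    exact hadd₁ ω v i a b
  map_update_smul' := by
    intro inst ω i c a
    have : inst = instDecidableEqFin p := Subsingleton.elim _ _
    subst this
    rw [smul_eq_mul]
    exact hsmul₁ ω v i c a

include hadd₂ hsmul₂ in
theorem expansionV (ω : Fin p → Module.Dual ℝ V) (v : Fin p → V) :
    Φ ω v = ∑ b : Idx p n, (∏ j, B.repr (v j) (b j)) * Φ ω (fun j => B (b j)) := by
  classical
  have h0 : ∀ w, Φ ω w = mlV Φ hadd₂ hsmul₂ ω w := fun _ => rfl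
  rw [h0]
  have h1 : v = fun j => ∑ x : Fin n, B.repr (v j) x • B x := by
    funext j
    exact (B.sum_repr (v j)).symm
  conv_lhs => rw [h1]
  rw [MultilinearMap.map_sum]
  refine Finset.sum_congr rfl fun b _ => ?_
  rw [MultilinearMap.map_smul_univ, smul_eq_mul]
  rfl

include hadd₁ hsmul₁ in
theorem expansionW (ω : Fin p → Module.Dual ℝ V) (v : Fin p → V) :
    Φ ω v = ∑ a : Idx p n, (∏ i, ω i (B (a i))) * Φ (fun i => B.coord (a i)) v := by
  classical
  have h0 : ∀ η, Φ η v = mlW Φ hadd₁ hsmul₁ v η := fun _ => rfl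
  rw [h0]
  have h1 : ω = fun i => ∑ x : Fin n, ω i (B x) • B.coord x := by
    funext i
    exact (B.sum_dual_apply_smul_coord (ω i)).symm
  conv_lhs => rw [h1]
  rw [MultilinearMap.map_sum]
  refine Finset.sum_congr rfl fun a _ => ?_
  rw [MultilinearMap.map_smul_univ, smul_eq_mul]
  rfl

include hadd₁ hsmul₁ hadd₂ hsmul₂ in
theorem expansion (ω : Fin p → Module.Dual ℝ V) (v : Fin p → V) :
    Φ ω v = ∑ a : Idx p n, ∑ b : Idx p n,
      (∏ i, ω i (B (a i))) * (∏ j, B.repr (v j) (b j)) * Tmat B Φ a b := by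
  rw [expansionV B Φ hadd₂ hsmul₂ ω v]
  have h1 : ∀ b : Idx p n, Φ ω (fun j => B (b j))
      = ∑ a : Idx p n, (∏ i, ω i (B (a i))) * Tmat B Φ a b := fun b =>
    expansionW B Φ hadd₁ hsmul₁ ω (fun j => B (b j))
  simp only [h1]
  rw [Finset.sum_comm]
  refine Finset.sum_congr rfl fun a _ => ?_
  rw [Finset.mul_sum]
  exact Finset.sum_congr rfl fun b _ => by ring

variable
    (hinv : ∀ (g : V ≃ₗ[ℝ] V) (ω : Fin p → Module.Dual ℝ V) (v : Fin p → V),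
        Φ (fun i => (ω i).comp (g.symm : V →ₗ[ℝ] V)) (fun j => g (v j)) = Φ ω v)

include hadd₁ hsmul₁ hadd₂ hsmul₂ hinv in
theorem Tmat_commutes (A : Matrix (Fin n) (Fin n) ℝ) (hA : IsUnit A.det) :
    Tmat B Φ * Kmat p A = Kmat p A * Tmat B Φ := by
  classical
  ext a c
  set g : V ≃ₗ[ℝ] V := Matrix.toLinearEquiv B A hA with hg
  have hgB : ∀ y : Fin n, g (B y) = ∑ x : Fin n, A x y • B x := by
    intro y
    rw [hg, Matrix.toLinearEquiv_apply, Matrix.toLin_self]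
  have hinv' : ∀ (ω : Fin p → Module.Dual ℝ V) (v : Fin p → V),
      Φ ω (fun j => g (v j)) = Φ (fun i => (ω i).comp (g : V →ₗ[ℝ] V)) v := by
    intro ω v
    have h2 := hinv g (fun i => (ω i).comp (g : V →ₗ[ℝ] V)) v
    have heq : (fun i => (((ω i).comp (g : V →ₗ[ℝ] V)).comp ((g.symm : V →ₗ[ℝ] V))))
        = ω := by
      funext i
      ext x
      simp
    rw [heq] at h2
    exact h2
  have hcoordB : ∀ (i : Fin n) (x : Fin n), B.coord i (B x) = if x = i then 1 else 0 := by
    intro i x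
    rw [Module.Basis.coord_apply, Module.Basis.repr_self, Finsupp.single_apply]
  -- left side
  have hstep1 : Φ (fun i => B.coord (a i)) (fun j => g (B (c j)))
      = ∑ b : Idx p n, Kmat p A b c * Tmat B Φ a b := by
    have h0 : ∀ w, Φ (fun i => B.coord (a i)) w
        = mlV Φ hadd₂ hsmul₂ (fun i => B.coord (a i)) w := fun _ => rfl
    rw [h0]
    have h1 : (fun j => g (B (c j))) = fun j => ∑ x : Fin n, A x (c j) • B x := by
      funext j
      exact hgB (c j)
    rw [h1, MultilinearMap.map_sum]
    refine Finset.sum_congr rfl fun b _ => ?_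
    rw [MultilinearMap.map_smul_univ, smul_eq_mul]
    rfl
  -- right side
  have hωg : ∀ i : Fin p, (B.coord (a i)).comp (g : V →ₗ[ℝ] V)
      = ∑ y : Fin n, A (a i) y • B.coord y := by
    intro i
    rw [← B.sum_dual_apply_smul_coord ((B.coord (a i)).comp (g : V →ₗ[ℝ] V))]
    refine Finset.sum_congr rfl fun y _ => ?_
    congr 1
    rw [LinearMap.comp_apply]
    rw [LinearEquiv.coe_coe, hgB y, map_sum]
    rw [Finset.sum_eq_single (a i)]
    · rw [map_smul, hcoordB, if_pos rfl, smul_eq_mul, mul_one]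
    · intro x _ hx
      rw [map_smul, hcoordB, if_neg hx, smul_eq_mul, mul_zero]
    · intro hmem
      exact absurd (Finset.mem_univ _) hmem
  have hstep2 : Φ (fun i => (B.coord (a i)).comp (g : V →ₗ[ℝ] V)) (fun j => B (c j))
      = ∑ a' : Idx p n, Kmat p A a a' * Tmat B Φ a' c := by
    have h0 : ∀ η, Φ η (fun j => B (c j))
        = mlW Φ hadd₁ hsmul₁ (fun j => B (c j)) η := fun _ => rfl
    rw [h0]
    have h1 : (fun i => (B.coord (a i)).comp (g : V →ₗ[ℝ] V))
        = fun i => ∑ y : Fin n, A (a i) y • B.coord y := by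
      funext i
      exact hωg i
    rw [h1, MultilinearMap.map_sum]
    refine Finset.sum_congr rfl fun a' _ => ?_
    rw [MultilinearMap.map_smul_univ, smul_eq_mul]
    rfl
  calc (Tmat B Φ * Kmat p A) a c = ∑ b : Idx p n, Tmat B Φ a b * Kmat p A b c :=
        Matrix.mul_apply
    _ = ∑ b : Idx p n, Kmat p A b c * Tmat B Φ a b :=
        Finset.sum_congr rfl fun b _ => mul_comm _ _
    _ = Φ (fun i => B.coord (a i)) (fun j => g (B (c j))) := hstep1.symm
    _ = Φ (fun i => (B.coord (a i)).comp (g : V →ₗ[ℝ] V)) (fun j => B (c j)) :=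
        hinv' _ _
    _ = ∑ a' : Idx p n, Kmat p A a a' * Tmat B Φ a' c := hstep2
    _ = (Kmat p A * Tmat B Φ) a c := Matrix.mul_apply.symm

end Phi

end InvThy

/-- Main theorem of invariant theory for `GL(V)`, case `p = q`: every
`GL(V)`-invariant multilinear map `(V*)^p × V^p → ℝ` is a linear combination of the
total contractions `Φ_σ(ω, v) = Π_i ω_i(v_{σ(i)})`, `σ ∈ S_p`. -/
theorem invariant_multilinear_map_eq_sum_total_contractions
    (V : Type*) [AddCommGroup V] [Module ℝ V] [FiniteDimensional ℝ V]
    (p : ℕ)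
    (Φ : (Fin p → Module.Dual ℝ V) → (Fin p → V) → ℝ)
    (hadd₁ : ∀ (ω : Fin p → Module.Dual ℝ V) (v : Fin p → V) (i : Fin p)
        (a b : Module.Dual ℝ V),
        Φ (Function.update ω i (a + b)) v
          = Φ (Function.update ω i a) v + Φ (Function.update ω i b) v)
    (hsmul₁ : ∀ (ω : Fin p → Module.Dual ℝ V) (v : Fin p → V) (i : Fin p)
        (c : ℝ) (a : Module.Dual ℝ V),
        Φ (Function.update ω i (c • a)) v = c * Φ (Function.update ω i a) v)
    (hadd₂ : ∀ (ω : Fin p → Module.Dual ℝ V) (v : Fin p → V) (j : Fin p) (a b : V),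
        Φ ω (Function.update v j (a + b))
          = Φ ω (Function.update v j a) + Φ ω (Function.update v j b))
    (hsmul₂ : ∀ (ω : Fin p → Module.Dual ℝ V) (v : Fin p → V) (j : Fin p)
        (c : ℝ) (a : V),
        Φ ω (Function.update v j (c • a)) = c * Φ ω (Function.update v j a))
    (hinv : ∀ (g : V ≃ₗ[ℝ] V) (ω : Fin p → Module.Dual ℝ V) (v : Fin p → V),
        Φ (fun i => (ω i).comp (g.symm : V →ₗ[ℝ] V)) (fun j => g (v j)) = Φ ω v) :
    ∃ c : Equiv.Perm (Fin p) → ℝ,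
      ∀ ω v, Φ ω v = ∑ σ : Equiv.Perm (Fin p), c σ * ∏ i, ω i (v (σ i)) := by
  classical
  set n := Module.finrank ℝ V with hn
  set B : Module.Basis (Fin n) ℝ V := Module.finBasis ℝ V with hB
  have hcomm : ∀ A : Matrix (Fin n) (Fin n) ℝ,
      InvThy.Tmat B Φ * InvThy.Kmat p A = InvThy.Kmat p A * InvThy.Tmat B Φ :=
    InvThy.density fun A hA =>
      InvThy.Tmat_commutes B Φ hadd₁ hsmul₁ hadd₂ hsmul₂ hinv A hA
  have hmem := InvThy.double_commutant hcomm
  obtain ⟨c, hc⟩ := (Submodule.mem_span_range_iff_exists_fun (R := ℝ)).mp hmem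
  refine ⟨c, fun ω v => ?_⟩
  rw [InvThy.expansion B Φ hadd₁ hsmul₁ hadd₂ hsmul₂ ω v]
  have hT : ∀ a b : InvThy.Idx p n, InvThy.Tmat B Φ a b
      = ∑ σ : Equiv.Perm (Fin p), c σ * InvThy.Pmat p n σ a b := by
    intro a b
    rw [← hc]
    rw [Matrix.sum_apply]
    exact Finset.sum_congr rfl fun σ _ => rfl
  simp only [hT]
  have step1 : ∀ a : InvThy.Idx p n,
      (∑ b : InvThy.Idx p n, (∏ i, ω i (B (a i))) * (∏ j, B.repr (v j) (b j))
        * (∑ σ : Equiv.Perm (Fin p), c σ * InvThy.Pmat p n σ a b))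
      = ∑ σ : Equiv.Perm (Fin p), ∑ b : InvThy.Idx p n,
          c σ * ((∏ i, ω i (B (a i))) * (∏ j, B.repr (v j) (b j))
            * InvThy.Pmat p n σ a b) := by
    intro a
    rw [Finset.sum_comm]
    refine Finset.sum_congr rfl fun b _ => ?_
    rw [Finset.mul_sum]
    exact Finset.sum_congr rfl fun σ _ => by ring
  simp only [step1]
  rw [Finset.sum_comm]
  refine Finset.sum_congr rfl fun σ _ => ?_
  -- collapse the b-sum using the permutation matrix
  have hb : ∀ a : InvThy.Idx p n,
      (∑ b : InvThy.Idx p n, c σ * ((∏ i, ω i (B (a i))) * (∏ j, B.repr (v j) (b j))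
        * InvThy.Pmat p n σ a b))
      = c σ * ((∏ i, ω i (B (a i))) * ∏ j, B.repr (v j) ((a ∘ ⇑σ⁻¹) j)) := by
    intro a
    rw [Finset.sum_eq_single (a ∘ ⇑σ⁻¹)]
    · have hx : a = (a ∘ ⇑σ⁻¹) ∘ ⇑σ := funext fun j => by
        simp [Function.comp_apply]
      rw [InvThy.Pmat, if_pos hx, mul_one]
    · intro b _ hbne
      have hxa : ¬ (a = b ∘ ⇑σ) := by
        intro hxa
        refine hbne (funext fun j => ?_)
        rw [Function.comp_apply, hxa, Function.comp_apply, ← Equiv.Perm.mul_apply, mul_inv_cancel,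
            Equiv.Perm.one_apply]
      rw [InvThy.Pmat, if_neg hxa, mul_zero, mul_zero]
    · intro hmem'
      exact absurd (Finset.mem_univ _) hmem'
  simp only [hb]
  rw [← Finset.mul_sum]
  congr 1
  have hcompose : ∀ a : InvThy.Idx p n,
      (∏ j, B.repr (v j) ((a ∘ ⇑σ⁻¹) j)) = ∏ i, B.repr (v (σ i)) (a i) := by
    intro a
    simp only [Function.comp_apply]
    rw [← Equiv.prod_comp σ (fun j => B.repr (v j) (a (σ⁻¹ j)))]
    exact Finset.prod_congr rfl fun i _ => by simp
  simp only [hcompose]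
  have hvex : ∀ i : Fin p, ω i (v (σ i)) = ∑ x : Fin n, B.repr (v (σ i)) x * ω i (B x) := by
    intro i
    conv_lhs => rw [← B.sum_repr (v (σ i))]
    rw [map_sum]
    exact Finset.sum_congr rfl fun x _ => by rw [map_smul, smul_eq_mul]
  symm
  calc (∏ i, ω i (v (σ i)))
      = ∏ i, ∑ x : Fin n, B.repr (v (σ i)) x * ω i (B x) :=
        Finset.prod_congr rfl fun i _ => hvex i
    _ = ∑ a ∈ Fintype.piFinset (fun _ : Fin p => (Finset.univ : Finset (Fin n))),
          ∏ i, B.repr (v (σ i)) (a i) * ω i (B (a i)) := Finset.prod_univ_sum _ _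
    _ = ∑ a : InvThy.Idx p n, (∏ i, ω i (B (a i))) * ∏ i, B.repr (v (σ i)) (a i) := by
        rw [Fintype.piFinset_univ]
        refine Finset.sum_congr rfl fun a _ => ?_
        rw [Finset.prod_mul_distrib]
        ring
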